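/- Let μ > 0, and for a > 0 let S_a = { (t_n)_{n≥0} : t_n ≥ 0, Σ t_n = 1, Σ n·t_n = a }. Then a·ln a − (a+1)·ln(a+1) = min_{(t_n)∈S_a} Σ_{n=0}^∞ t_n ln t_n, i.e., the infimum of the entropy sum over probability sequences on ℕ with mean a equals a·ln a − (a+1)·ln(a+1). -/

import Mathlib

open Real

/-- Cross entropy against the geometric distribution. -/
lemma entropy_cross (a : ℝ) (ha : 0 < a) (t : ℕ → ℝ)
    (hsum : Summable t) (h1 : ∑' n : ℕ, t n = 1)
    (hsumn : Summable fun n : ℕ => (n : ℝ) * t n)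
    (hmean : ∑' n : ℕ, (n : ℝ) * t n = a) :
    ∑' n : ℕ, t n * Real.log ((a+1)⁻¹ * (a/(a+1))^n)
      = a * Real.log a - (a + 1) * Real.log (a + 1) := by
  have ha1 : (0:ℝ) < a + 1 := by linarith
  have hlog : ∀ n : ℕ, Real.log ((a+1)⁻¹ * (a/(a+1))^n)
      = -Real.log (a+1) + (n : ℝ) * (Real.log a - Real.log (a+1)) := by
    intro n
    rw [Real.log_mul (by positivity) (by positivity), Real.log_inv, Real.log_pow,
      Real.log_div ha.ne' ha1.ne']
  have hfun : (fun n : ℕ => t n * Real.log ((a+1)⁻¹ * (a/(a+1))^n))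
      = fun n : ℕ => (-Real.log (a+1)) * t n
        + (Real.log a - Real.log (a+1)) * ((n : ℝ) * t n) := by
    funext n; rw [hlog]; ring
  rw [hfun, Summable.tsum_add (hsum.mul_left _) (hsumn.mul_left _),
    tsum_mul_left, tsum_mul_left, h1, hmean]
  ring

/-- For every `a > 0`, the minimum of the entropy sum `Σ tₙ ln tₙ` over all
probability sequences `(tₙ)` on `ℕ` with mean `Σ n·tₙ = a` equals
`a·ln a − (a+1)·ln(a+1)`.  (Here `t ln t = 0` at `t = 0`, which holds for `Real.log`.) -/
theorem min_entropy_fixed_mean (μ : ℝ) (hμ : 0 < μ) (a : ℝ) (ha : 0 < a) :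
    IsLeast
      {x : ℝ | ∃ t : ℕ → ℝ, (∀ n, 0 ≤ t n) ∧ Summable t ∧ (∑' n : ℕ, t n) = 1 ∧
        Summable (fun n : ℕ => (n : ℝ) * t n) ∧ (∑' n : ℕ, (n : ℝ) * t n) = a ∧
        Summable (fun n => t n * Real.log (t n)) ∧
        x = ∑' n : ℕ, t n * Real.log (t n)}
      (a * Real.log a - (a + 1) * Real.log (a + 1)) := by
  have ha1 : (0:ℝ) < a + 1 := by linarith
  set r : ℝ := a / (a + 1) with hr
  have hr0 : 0 < r := div_pos ha ha1
  have hr1 : r < 1 := (div_lt_one ha1).2 (by linarith)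
  have hrn : ‖r‖ < 1 := by rw [Real.norm_eq_abs, abs_of_pos hr0]; exact hr1
  set q : ℕ → ℝ := fun n => (a+1)⁻¹ * r ^ n with hq
  have hq0 : ∀ n, 0 < q n := fun n => by positivity
  -- geometric sums
  have hsgeo : Summable fun n : ℕ => r ^ n := summable_geometric_of_lt_one hr0.le hr1
  have hsumq : Summable q := hsgeo.mul_left _
  have h1r : 1 - r = (a+1)⁻¹ := by rw [hr]; field_simp; ring
  have htq : ∑' n : ℕ, q n = 1 := by
    rw [tsum_mul_left, tsum_geometric_of_lt_one hr0.le hr1, h1r, inv_inv]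
    field_simp
  have hsgeon : Summable fun n : ℕ => (n : ℝ) * r ^ n := by
    have := summable_pow_mul_geometric_of_norm_lt_one 1 hrn (R := ℝ)
    simpa using this
  have hsumnq : Summable fun n : ℕ => (n : ℝ) * q n := by
    have : (fun n : ℕ => (n : ℝ) * q n) = fun n : ℕ => (a+1)⁻¹ * ((n : ℝ) * r ^ n) := by
      funext n; simp [hq]; ring
    rw [this]; exact hsgeon.mul_left _
  have htnq : ∑' n : ℕ, (n : ℝ) * q n = a := by
    have h2 : ∑' n : ℕ, (n : ℝ) * r ^ n = r / (1 - r) ^ 2 :=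
      tsum_coe_mul_geometric_of_norm_lt_one hrn
    have : (fun n : ℕ => (n : ℝ) * q n) = fun n : ℕ => (a+1)⁻¹ * ((n : ℝ) * r ^ n) := by
      funext n; simp [hq]; ring
    rw [this, tsum_mul_left, h2, h1r, hr]
    have hne : a + 1 ≠ 0 := ha1.ne'
    rw [inv_pow, div_inv_eq_mul, div_mul_eq_mul_div]
    field_simp
  -- entropy of q is summable
  have hlogq : ∀ n : ℕ, Real.log (q n)
      = -Real.log (a+1) + (n : ℝ) * (Real.log a - Real.log (a+1)) := by
    intro n
    rw [hq]
    rw [Real.log_mul (by positivity) (by positivity), Real.log_inv, Real.log_pow,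
      hr, Real.log_div ha.ne' ha1.ne']
  have hqlogfun : (fun n : ℕ => q n * Real.log (q n))
      = fun n : ℕ => (-Real.log (a+1)) * q n
        + (Real.log a - Real.log (a+1)) * ((n : ℝ) * q n) := by
    funext n; rw [hlogq]; ring
  have hsumqlog : Summable fun n : ℕ => q n * Real.log (q n) := by
    rw [hqlogfun]; exact (hsumq.mul_left _).add (hsumnq.mul_left _)
  constructor
  · -- membership : take t = q
    refine ⟨q, fun n => (hq0 n).le, hsumq, htq, hsumnq, htnq, hsumqlog, ?_⟩
    have := entropy_cross a ha q hsumq htq hsumnq htnq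
    rw [← this]
  · -- lower bound
    rintro x ⟨t, ht0, hsumt, ht1, hsumnt, htmean, hsumtlog, hx⟩
    -- cross entropy sum
    have hcross := entropy_cross a ha t hsumt ht1 hsumnt htmean
    -- pointwise Gibbs inequality
    have hpt : ∀ n : ℕ, t n * Real.log (q n) + (t n - q n) ≤ t n * Real.log (t n) := by
      intro n
      rcases eq_or_lt_of_le (ht0 n) with h | h
      · rw [← h]; simp [(hq0 n).le]
      · have hdiv : 0 < q n / t n := div_pos (hq0 n) h
        have hlog := Real.log_le_sub_one_of_pos hdiv
        rw [Real.log_div (hq0 n).ne' h.ne'] at hlog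
        have := mul_le_mul_of_nonneg_left hlog h.le
        have heq : t n * (q n / t n - 1) = q n - t n := by field_simp
        rw [heq] at this
        nlinarith
    -- summability of LHS
    have hsumlhs : Summable fun n : ℕ => t n * Real.log (q n) + (t n - q n) := by
      have h1 : Summable fun n : ℕ => t n * Real.log (q n) := by
        have : (fun n : ℕ => t n * Real.log (q n))
            = fun n : ℕ => (-Real.log (a+1)) * t n
              + (Real.log a - Real.log (a+1)) * ((n : ℝ) * t n) := by
          funext n; rw [hlogq]; ring
        rw [this]; exact (hsumt.mul_left _).add (hsumnt.mul_left _)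
      exact h1.add (hsumt.sub hsumq)
    have hle : ∑' n : ℕ, (t n * Real.log (q n) + (t n - q n))
        ≤ ∑' n : ℕ, t n * Real.log (t n) := Summable.tsum_le_tsum hpt hsumlhs hsumtlog
    have h1' : Summable fun n : ℕ => t n * Real.log (q n) := by
      have : (fun n : ℕ => t n * Real.log (q n))
          = fun n : ℕ => (-Real.log (a+1)) * t n
            + (Real.log a - Real.log (a+1)) * ((n : ℝ) * t n) := by
        funext n; rw [hlogq]; ring
      rw [this]; exact (hsumt.mul_left _).add (hsumnt.mul_left _)
    have hsplit : ∑' n : ℕ, (t n * Real.log (q n) + (t n - q n))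
        = (∑' n : ℕ, t n * Real.log (q n)) + ((∑' n : ℕ, t n) - ∑' n : ℕ, q n) := by
      rw [Summable.tsum_add h1' (hsumt.sub hsumq), Summable.tsum_sub hsumt hsumq]
    rw [hsplit, ht1, htq, hcross] at hle
    simpa [hx] using hle
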